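/- arXiv:2510.16403 — 8 statements merged into one kernel-verified Lean document; each statement's English description precedes it below -/
import Mathlib

section
/- Let X be a real normed space, Ω ⊆ X, α₁, α₂ ∈ [0,1], and T₁, T₂ : Ω → Ω with ‖T_i(ξ) - T_i(η)‖ ≤ α_i‖ξ - η‖ for all ξ, η ∈ Ω, and T₁(x*) = T₂(x*) = x* for some x* ∈ Ω. Let (a_n), (b_n) ⊂ [0,1], and define y_n = (1-a_n)x_n + a_n T₁(x_n), x_{n+1} = (1-b_n)T₁(y_n) + b_n T₂(y_n) (assuming y_n, x_{n+1} ∈ Ω). Then for all n, ‖x_{n+1} - x*‖ ≤ [1 - (1-α₁)a_n][α₁ + (α₂-α₁)b_n]‖x_n - x*‖. -/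
theorem IG_one_step {X : Type*} [NormedAddCommGroup X] [NormedSpace ℝ X]
    (Ω : Set X) (α₁ α₂ : ℝ)
    (hα₁ : α₁ ∈ Set.Icc (0 : ℝ) 1) (hα₂ : α₂ ∈ Set.Icc (0 : ℝ) 1)
    (T₁ T₂ : X → X)
    (hT₁map : ∀ ξ ∈ Ω, T₁ ξ ∈ Ω) (hT₂map : ∀ ξ ∈ Ω, T₂ ξ ∈ Ω)
    (hT₁ : ∀ ξ ∈ Ω, ∀ η ∈ Ω, ‖T₁ ξ - T₁ η‖ ≤ α₁ * ‖ξ - η‖)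
    (hT₂ : ∀ ξ ∈ Ω, ∀ η ∈ Ω, ‖T₂ ξ - T₂ η‖ ≤ α₂ * ‖ξ - η‖)
    (xs : X) (hxs : xs ∈ Ω) (hfix₁ : T₁ xs = xs) (hfix₂ : T₂ xs = xs)
    (a b : ℕ → ℝ)
    (ha : ∀ n, a n ∈ Set.Icc (0 : ℝ) 1) (hb : ∀ n, b n ∈ Set.Icc (0 : ℝ) 1)
    (x y : ℕ → X) (hxΩ : ∀ n, x n ∈ Ω) (hyΩ : ∀ n, y n ∈ Ω)
    (hy : ∀ n, y n = (1 - a n) • x n + a n • T₁ (x n))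
    (hx : ∀ n, x (n + 1) = (1 - b n) • T₁ (y n) + b n • T₂ (y n)) :
    ∀ n, ‖x (n + 1) - xs‖ ≤
      (1 - (1 - α₁) * a n) * (α₁ + (α₂ - α₁) * b n) * ‖x n - xs‖ := by
  intro n
  obtain ⟨ha0, ha1⟩ := ha n
  obtain ⟨hb0, hb1⟩ := hb n
  obtain ⟨hα₁0, hα₁1⟩ := hα₁
  obtain ⟨hα₂0, hα₂1⟩ := hα₂
  have hxn0 : (0:ℝ) ≤ ‖x n - xs‖ := norm_nonneg _
  -- Step 1: bound on y n
  have hystep : ‖y n - xs‖ ≤ (1 - (1 - α₁) * a n) * ‖x n - xs‖ := by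
    have hdecomp : y n - xs = (1 - a n) • (x n - xs) + a n • (T₁ (x n) - T₁ xs) := by
      rw [hy n, hfix₁]
      have : ((1 - a n) + a n) • xs = (1:ℝ) • xs := by ring_nf
      simp only [smul_sub, sub_smul, one_smul]
      abel
    calc ‖y n - xs‖ ≤ ‖(1 - a n) • (x n - xs)‖ + ‖a n • (T₁ (x n) - T₁ xs)‖ := by
          rw [hdecomp]; exact norm_add_le _ _
      _ = (1 - a n) * ‖x n - xs‖ + a n * ‖T₁ (x n) - T₁ xs‖ := by
          rw [norm_smul, norm_smul, Real.norm_eq_abs, Real.norm_eq_abs,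
            abs_of_nonneg (by linarith), abs_of_nonneg ha0]
      _ ≤ (1 - a n) * ‖x n - xs‖ + a n * (α₁ * ‖x n - xs‖) := by
          have := hT₁ (x n) (hxΩ n) xs hxs
          nlinarith
      _ = (1 - (1 - α₁) * a n) * ‖x n - xs‖ := by ring
  have hy0 : (0:ℝ) ≤ ‖y n - xs‖ := norm_nonneg _
  -- Step 2: bound on x (n+1)
  have hdecomp : x (n+1) - xs = (1 - b n) • (T₁ (y n) - T₁ xs) + b n • (T₂ (y n) - T₂ xs) := by
    rw [hx n, hfix₁, hfix₂]
    simp only [smul_sub, sub_smul, one_smul]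
    abel
  have hstep2 : ‖x (n+1) - xs‖ ≤ (α₁ + (α₂ - α₁) * b n) * ‖y n - xs‖ := by
    calc ‖x (n+1) - xs‖ ≤ ‖(1 - b n) • (T₁ (y n) - T₁ xs)‖ + ‖b n • (T₂ (y n) - T₂ xs)‖ := by
          rw [hdecomp]; exact norm_add_le _ _
      _ = (1 - b n) * ‖T₁ (y n) - T₁ xs‖ + b n * ‖T₂ (y n) - T₂ xs‖ := by
          rw [norm_smul, norm_smul, Real.norm_eq_abs, Real.norm_eq_abs,
            abs_of_nonneg (by linarith), abs_of_nonneg hb0]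
      _ ≤ (1 - b n) * (α₁ * ‖y n - xs‖) + b n * (α₂ * ‖y n - xs‖) := by
          have h1 := hT₁ (y n) (hyΩ n) xs hxs
          have h2 := hT₂ (y n) (hyΩ n) xs hxs
          have hT1n : (0:ℝ) ≤ ‖T₁ (y n) - T₁ xs‖ := norm_nonneg _
          have hT2n : (0:ℝ) ≤ ‖T₂ (y n) - T₂ xs‖ := norm_nonneg _
          nlinarith
      _ = (α₁ + (α₂ - α₁) * b n) * ‖y n - xs‖ := by ring
  have hcoef : (0:ℝ) ≤ α₁ + (α₂ - α₁) * b n := by nlinarith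
  calc ‖x (n+1) - xs‖ ≤ (α₁ + (α₂ - α₁) * b n) * ‖y n - xs‖ := hstep2
    _ ≤ (α₁ + (α₂ - α₁) * b n) * ((1 - (1 - α₁) * a n) * ‖x n - xs‖) :=
        mul_le_mul_of_nonneg_left hystep hcoef
    _ = (1 - (1 - α₁) * a n) * (α₁ + (α₂ - α₁) * b n) * ‖x n - xs‖ := by ring
end

section
/- Under the hypotheses of the (IG) iteration one-step estimate, for all n ∈ ℕ the iterate satisfies ‖x_{n+1} - x*‖ ≤ (∏_{k=0}^{n} [1 - (1-α₁)a_k][α₁ + (α₂-α₁)b_k]) · ‖x₀ - x*‖. -/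
theorem IG_upper_bound {X : Type*} [NormedAddCommGroup X] [NormedSpace ℝ X]
    (Ω : Set X) (hΩ : Convex ℝ Ω) (α₁ α₂ : ℝ)
    (hα₁ : α₁ ∈ Set.Icc (0 : ℝ) 1) (hα₂ : α₂ ∈ Set.Icc (0 : ℝ) 1)
    (T₁ T₂ : X → X)
    (hT₁map : ∀ ξ ∈ Ω, T₁ ξ ∈ Ω) (hT₂map : ∀ ξ ∈ Ω, T₂ ξ ∈ Ω)
    (hT₁ : ∀ ξ ∈ Ω, ∀ η ∈ Ω, ‖T₁ ξ - T₁ η‖ ≤ α₁ * ‖ξ - η‖)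
    (hT₂ : ∀ ξ ∈ Ω, ∀ η ∈ Ω, ‖T₂ ξ - T₂ η‖ ≤ α₂ * ‖ξ - η‖)
    (xs : X) (hxs : xs ∈ Ω) (hfix₁ : T₁ xs = xs) (hfix₂ : T₂ xs = xs)
    (a b : ℕ → ℝ)
    (ha : ∀ n, a n ∈ Set.Icc (0 : ℝ) 1) (hb : ∀ n, b n ∈ Set.Icc (0 : ℝ) 1)
    (x y : ℕ → X) (hxΩ : ∀ n, x n ∈ Ω) (hyΩ : ∀ n, y n ∈ Ω)
    (hy : ∀ n, y n = (1 - a n) • x n + a n • T₁ (x n))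
    (hx : ∀ n, x (n + 1) = (1 - b n) • T₁ (y n) + b n • T₂ (y n)) :
    ∀ n, ‖x (n + 1) - xs‖ ≤
      (∏ k ∈ Finset.range (n + 1),
        (1 - (1 - α₁) * a k) * (α₁ + (α₂ - α₁) * b k)) * ‖x 0 - xs‖ := by
  obtain ⟨hα₁0, hα₁1⟩ := hα₁
  obtain ⟨hα₂0, hα₂1⟩ := hα₂
  have hfac : ∀ k, 0 ≤ (1 - (1 - α₁) * a k) * (α₁ + (α₂ - α₁) * b k) := by
    intro k
    obtain ⟨ha0, ha1⟩ := ha k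
    obtain ⟨hb0, hb1⟩ := hb k
    have h1 : 0 ≤ 1 - (1 - α₁) * a k := by nlinarith
    have h2 : 0 ≤ α₁ + (α₂ - α₁) * b k := by nlinarith
    positivity
  have key : ∀ n, ‖x (n + 1) - xs‖ ≤
      (1 - (1 - α₁) * a n) * (α₁ + (α₂ - α₁) * b n) * ‖x n - xs‖ := by
    intro n
    obtain ⟨ha0, ha1⟩ := ha n
    obtain ⟨hb0, hb1⟩ := hb n
    have hT1x : ‖T₁ (x n) - xs‖ ≤ α₁ * ‖x n - xs‖ := by
      simpa [hfix₁] using hT₁ (x n) (hxΩ n) xs hxs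
    have hT1y : ‖T₁ (y n) - xs‖ ≤ α₁ * ‖y n - xs‖ := by
      simpa [hfix₁] using hT₁ (y n) (hyΩ n) xs hxs
    have hT2y : ‖T₂ (y n) - xs‖ ≤ α₂ * ‖y n - xs‖ := by
      simpa [hfix₂] using hT₂ (y n) (hyΩ n) xs hxs
    have hyb : ‖y n - xs‖ ≤ (1 - (1 - α₁) * a n) * ‖x n - xs‖ := by
      have h1 : y n - xs = (1 - a n) • (x n - xs) + a n • (T₁ (x n) - xs) := by
        rw [hy n]; module
      calc ‖y n - xs‖ ≤ ‖(1 - a n) • (x n - xs)‖ + ‖a n • (T₁ (x n) - xs)‖ := by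
            rw [h1]; exact norm_add_le _ _
        _ = (1 - a n) * ‖x n - xs‖ + a n * ‖T₁ (x n) - xs‖ := by
            rw [norm_smul, norm_smul, Real.norm_eq_abs, Real.norm_eq_abs,
              abs_of_nonneg (by linarith), abs_of_nonneg ha0]
        _ ≤ (1 - a n) * ‖x n - xs‖ + a n * (α₁ * ‖x n - xs‖) := by
            have := mul_le_mul_of_nonneg_left hT1x ha0
            linarith
        _ = (1 - (1 - α₁) * a n) * ‖x n - xs‖ := by ring
    have hxb : ‖x (n + 1) - xs‖ ≤ (α₁ + (α₂ - α₁) * b n) * ‖y n - xs‖ := by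
      have h1 : x (n + 1) - xs = (1 - b n) • (T₁ (y n) - xs) + b n • (T₂ (y n) - xs) := by
        rw [hx n]; module
      calc ‖x (n + 1) - xs‖
          ≤ ‖(1 - b n) • (T₁ (y n) - xs)‖ + ‖b n • (T₂ (y n) - xs)‖ := by
            rw [h1]; exact norm_add_le _ _
        _ = (1 - b n) * ‖T₁ (y n) - xs‖ + b n * ‖T₂ (y n) - xs‖ := by
            rw [norm_smul, norm_smul, Real.norm_eq_abs, Real.norm_eq_abs,
              abs_of_nonneg (by linarith), abs_of_nonneg hb0]
        _ ≤ (1 - b n) * (α₁ * ‖y n - xs‖) + b n * (α₂ * ‖y n - xs‖) := by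
            have h2 := mul_le_mul_of_nonneg_left hT1y (by linarith : (0:ℝ) ≤ 1 - b n)
            have h3 := mul_le_mul_of_nonneg_left hT2y hb0
            linarith
        _ = (α₁ + (α₂ - α₁) * b n) * ‖y n - xs‖ := by ring
    have hq : 0 ≤ α₁ + (α₂ - α₁) * b n := by nlinarith
    calc ‖x (n + 1) - xs‖ ≤ (α₁ + (α₂ - α₁) * b n) * ‖y n - xs‖ := hxb
      _ ≤ (α₁ + (α₂ - α₁) * b n) * ((1 - (1 - α₁) * a n) * ‖x n - xs‖) :=
          mul_le_mul_of_nonneg_left hyb hq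
      _ = (1 - (1 - α₁) * a n) * (α₁ + (α₂ - α₁) * b n) * ‖x n - xs‖ := by ring
  intro n
  induction n with
  | zero => simpa using key 0
  | succ n ih =>
      calc ‖x (n + 2) - xs‖
          ≤ (1 - (1 - α₁) * a (n + 1)) * (α₁ + (α₂ - α₁) * b (n + 1)) * ‖x (n + 1) - xs‖ :=
            key (n + 1)
        _ ≤ (1 - (1 - α₁) * a (n + 1)) * (α₁ + (α₂ - α₁) * b (n + 1)) *
            ((∏ k ∈ Finset.range (n + 1),
              (1 - (1 - α₁) * a k) * (α₁ + (α₂ - α₁) * b k)) * ‖x 0 - xs‖) :=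
            mul_le_mul_of_nonneg_left ih (hfac (n + 1))
        _ = (∏ k ∈ Finset.range (n + 2),
              (1 - (1 - α₁) * a k) * (α₁ + (α₂ - α₁) * b k)) * ‖x 0 - xs‖ := by
            rw [Finset.prod_range_succ _ (n + 1)]; ring
end

section
/- With Ω = (0, 1/2) ⊂ ℝ, T₁(x) = α₁x, T₂(x) = α₂x, and x* = 0, the (IG) iteration satisfies ‖x_{n+1} - x*‖ = (∏_{k=0}^{n} [1 - (1-α₁)a_k][α₁ + (α₂-α₁)b_k]) ‖x₀ - x*‖ for all n ∈ ℕ, showing the upper bound U_n^{IG} is attained (optimal). -/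
theorem IG_upper_bound_attained (α₁ α₂ : ℝ)
    (hα₁ : α₁ ∈ Set.Icc (0 : ℝ) 1) (hα₂ : α₂ ∈ Set.Icc (0 : ℝ) 1)
    (a b : ℕ → ℝ)
    (ha : ∀ n, a n ∈ Set.Icc (0 : ℝ) 1) (hb : ∀ n, b n ∈ Set.Icc (0 : ℝ) 1)
    (x y : ℕ → ℝ)
    (hx0 : x 0 ∈ Set.Ioo (0 : ℝ) (1 / 2))
    (hy : ∀ n, y n = (1 - a n) * x n + a n * (α₁ * x n))
    (hx : ∀ n, x (n + 1) = (1 - b n) * (α₁ * y n) + b n * (α₂ * y n)) :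
    ∀ n, ‖x (n + 1) - 0‖ =
      (∏ k ∈ Finset.range (n + 1),
        (1 - (1 - α₁) * a k) * (α₁ + (α₂ - α₁) * b k)) * ‖x 0 - 0‖ := by
  have hfac : ∀ k, 0 ≤ (1 - (1 - α₁) * a k) * (α₁ + (α₂ - α₁) * b k) := by
    intro k
    obtain ⟨ha0, ha1⟩ := ha k
    obtain ⟨hb0, hb1⟩ := hb k
    apply mul_nonneg
    · nlinarith [hα₁.1, hα₁.2]
    · nlinarith [hα₁.1, hα₂.1]
  have key : ∀ n, x (n + 1) =
      (∏ k ∈ Finset.range (n + 1),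
        (1 - (1 - α₁) * a k) * (α₁ + (α₂ - α₁) * b k)) * x 0 := by
    intro n
    induction n with
    | zero => simp [hx 0, hy 0]; ring
    | succ m ih =>
      rw [Finset.prod_range_succ, hx (m + 1), hy (m + 1), ih]
      ring
  intro n
  rw [key n, sub_zero, sub_zero, Real.norm_eq_abs, Real.norm_eq_abs, abs_mul,
    abs_of_nonneg (Finset.prod_nonneg fun k _ => hfac k)]
end

section
/- Let X be a real normed space, Ω ⊆ X convex, S₁ β₁-Lipschitz, S₂ β₂-Lipschitz, T₁ α₁-Lipschitz, T₂ α₂-Lipschitz self-maps of Ω with common fixed point x*, and (a_n),(b_n) ⊂ [0,1]. Define y_n = (1-a_n)S₁(x_n) + a_n T₁(x_n), x_{n+1} = (1-b_n)S₂(y_n) + b_n T₂(y_n). Then ‖x_{n+1} - x*‖ ≤ (∏_{k=0}^{n} [β₁ + (α₁-β₁)a_k][β₂ + (α₂-β₂)b_k]) ‖x₀ - x*‖ for all n. -/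
theorem G_upper_bound {X : Type*} [NormedAddCommGroup X] [NormedSpace ℝ X]
    (Ω : Set X) (hΩ : Convex ℝ Ω) (α₁ α₂ β₁ β₂ : ℝ)
    (hα₁ : α₁ ∈ Set.Icc (0 : ℝ) 1) (hα₂ : α₂ ∈ Set.Icc (0 : ℝ) 1)
    (hβ₁ : β₁ ∈ Set.Icc (0 : ℝ) 1) (hβ₂ : β₂ ∈ Set.Icc (0 : ℝ) 1)
    (S₁ S₂ T₁ T₂ : X → X)
    (hS₁map : ∀ ξ ∈ Ω, S₁ ξ ∈ Ω) (hS₂map : ∀ ξ ∈ Ω, S₂ ξ ∈ Ω)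
    (hT₁map : ∀ ξ ∈ Ω, T₁ ξ ∈ Ω) (hT₂map : ∀ ξ ∈ Ω, T₂ ξ ∈ Ω)
    (hS₁ : ∀ ξ ∈ Ω, ∀ η ∈ Ω, ‖S₁ ξ - S₁ η‖ ≤ β₁ * ‖ξ - η‖)
    (hS₂ : ∀ ξ ∈ Ω, ∀ η ∈ Ω, ‖S₂ ξ - S₂ η‖ ≤ β₂ * ‖ξ - η‖)
    (hT₁ : ∀ ξ ∈ Ω, ∀ η ∈ Ω, ‖T₁ ξ - T₁ η‖ ≤ α₁ * ‖ξ - η‖)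
    (hT₂ : ∀ ξ ∈ Ω, ∀ η ∈ Ω, ‖T₂ ξ - T₂ η‖ ≤ α₂ * ‖ξ - η‖)
    (xs : X) (hxs : xs ∈ Ω)
    (hfS₁ : S₁ xs = xs) (hfS₂ : S₂ xs = xs) (hfT₁ : T₁ xs = xs) (hfT₂ : T₂ xs = xs)
    (a b : ℕ → ℝ)
    (ha : ∀ n, a n ∈ Set.Icc (0 : ℝ) 1) (hb : ∀ n, b n ∈ Set.Icc (0 : ℝ) 1)
    (x y : ℕ → X) (hxΩ : ∀ n, x n ∈ Ω) (hyΩ : ∀ n, y n ∈ Ω)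
    (hy : ∀ n, y n = (1 - a n) • S₁ (x n) + a n • T₁ (x n))
    (hx : ∀ n, x (n + 1) = (1 - b n) • S₂ (y n) + b n • T₂ (y n)) :
    ∀ n, ‖x (n + 1) - xs‖ ≤
      (∏ k ∈ Finset.range (n + 1),
        (β₁ + (α₁ - β₁) * a k) * (β₂ + (α₂ - β₂) * b k)) * ‖x 0 - xs‖ := by
  -- single-step estimate
  have key : ∀ (S T : X → X) (β α t : ℝ),
      (∀ ξ ∈ Ω, ‖S ξ - S xs‖ ≤ β * ‖ξ - xs‖) →
      (∀ ξ ∈ Ω, ‖T ξ - T xs‖ ≤ α * ‖ξ - xs‖) →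
      S xs = xs → T xs = xs → t ∈ Set.Icc (0:ℝ) 1 →
      ∀ ξ ∈ Ω, ‖(1 - t) • S ξ + t • T ξ - xs‖ ≤ (β + (α - β) * t) * ‖ξ - xs‖ := by
    intro S T β α t hS hT hfS hfT ht ξ hξ
    have heq : (1 - t) • S ξ + t • T ξ - xs
        = (1 - t) • (S ξ - xs) + t • (T ξ - xs) := by
      module
    rw [heq]
    calc ‖(1 - t) • (S ξ - xs) + t • (T ξ - xs)‖
        ≤ ‖(1 - t) • (S ξ - xs)‖ + ‖t • (T ξ - xs)‖ := norm_add_le _ _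
      _ = (1 - t) * ‖S ξ - xs‖ + t * ‖T ξ - xs‖ := by
          rw [norm_smul, norm_smul, Real.norm_of_nonneg (by linarith [ht.2]),
            Real.norm_of_nonneg ht.1]
      _ ≤ (1 - t) * (β * ‖ξ - xs‖) + t * (α * ‖ξ - xs‖) := by
          have h1 := hS ξ hξ; have h2 := hT ξ hξ
          rw [hfS] at h1; rw [hfT] at h2
          have := ht.1; have := ht.2
          gcongr <;> linarith
      _ = (β + (α - β) * t) * ‖ξ - xs‖ := by ring
  have hyb : ∀ n, ‖y n - xs‖ ≤ (β₁ + (α₁ - β₁) * a n) * ‖x n - xs‖ := by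
    intro n
    rw [hy n]
    exact key S₁ T₁ β₁ α₁ (a n) (fun ξ hξ => hS₁ ξ hξ xs hxs)
      (fun ξ hξ => hT₁ ξ hξ xs hxs) hfS₁ hfT₁ (ha n) (x n) (hxΩ n)
  have hxb : ∀ n, ‖x (n+1) - xs‖ ≤ (β₂ + (α₂ - β₂) * b n) * ‖y n - xs‖ := by
    intro n
    rw [hx n]
    exact key S₂ T₂ β₂ α₂ (b n) (fun ξ hξ => hS₂ ξ hξ xs hxs)
      (fun ξ hξ => hT₂ ξ hξ xs hxs) hfS₂ hfT₂ (hb n) (y n) (hyΩ n)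
  have hc1 : ∀ n, 0 ≤ β₁ + (α₁ - β₁) * a n := by
    intro n
    have := (ha n).1; have := (ha n).2
    nlinarith [hα₁.1, hβ₁.1]
  have hc2 : ∀ n, 0 ≤ β₂ + (α₂ - β₂) * b n := by
    intro n
    have := (hb n).1; have := (hb n).2
    nlinarith [hα₂.1, hβ₂.1]
  have step : ∀ n, ‖x (n+1) - xs‖ ≤
      ((β₁ + (α₁ - β₁) * a n) * (β₂ + (α₂ - β₂) * b n)) * ‖x n - xs‖ := by
    intro n
    calc ‖x (n+1) - xs‖ ≤ (β₂ + (α₂ - β₂) * b n) * ‖y n - xs‖ := hxb n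
      _ ≤ (β₂ + (α₂ - β₂) * b n) * ((β₁ + (α₁ - β₁) * a n) * ‖x n - xs‖) := by
          gcongr; · exact hc2 n
          · exact hyb n
      _ = _ := by ring
  intro n
  induction n with
  | zero => simpa using step 0
  | succ m ih =>
    calc ‖x (m+2) - xs‖
        ≤ ((β₁ + (α₁ - β₁) * a (m+1)) * (β₂ + (α₂ - β₂) * b (m+1))) * ‖x (m+1) - xs‖ :=
          step (m+1)
      _ ≤ ((β₁ + (α₁ - β₁) * a (m+1)) * (β₂ + (α₂ - β₂) * b (m+1))) *
          ((∏ k ∈ Finset.range (m + 1),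
            (β₁ + (α₁ - β₁) * a k) * (β₂ + (α₂ - β₂) * b k)) * ‖x 0 - xs‖) := by
          gcongr
          exact mul_nonneg (hc1 _) (hc2 _)
      _ = _ := by
          conv_rhs => rw [Finset.prod_range_succ]
          ring
end

section
/- Let X be a real normed space, Ω ⊆ X convex, S₁ ∈ N_{κ₁,β₁}(Ω), S₂ ∈ N_{κ₂,β₂}(Ω), T₁ α₁-Lipschitz, T₂ α₂-Lipschitz on Ω, all with common fixed point x*, and suppose a_n ≤ κ₁/(κ₁+α₁) and b_n ≤ κ₂/(κ₂+α₂) for all n. Then the (G) iterates satisfy ‖x_{n+1} - x*‖ ≥ (∏_{k=0}^{n} [κ₁ - (κ₁+α₁)a_k][κ₂ - (κ₂+α₂)b_k]) ‖x₀ - x*‖ for all n. -/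
lemma G_key {X : Type*} [NormedAddCommGroup X] [NormedSpace ℝ X]
    (κ α c : ℝ) (hc0 : 0 ≤ c) (hc1 : c ≤ 1) (u v : X) (d : ℝ)
    (hu : κ * d ≤ ‖u‖) (hv : ‖v‖ ≤ α * d) :
    (κ - (κ + α) * c) * d ≤ ‖(1 - c) • u + c • v‖ := by
  have h1 : ‖(1 - c) • u‖ = (1 - c) * ‖u‖ := by
    rw [norm_smul, Real.norm_of_nonneg (by linarith)]
  have h2 : ‖c • v‖ = c * ‖v‖ := by
    rw [norm_smul, Real.norm_of_nonneg hc0]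
  have h3 : ‖(1 - c) • u‖ ≤ ‖(1 - c) • u + c • v‖ + ‖c • v‖ := by
    calc ‖(1 - c) • u‖ = ‖((1 - c) • u + c • v) - c • v‖ := by rw [add_sub_cancel_right]
      _ ≤ ‖(1 - c) • u + c • v‖ + ‖c • v‖ := norm_sub_le _ _
  have h5 := mul_le_mul_of_nonneg_left hu (by linarith : (0:ℝ) ≤ 1 - c)
  have h6 := mul_le_mul_of_nonneg_left hv hc0
  nlinarith

theorem G_lower_bound {X : Type*} [NormedAddCommGroup X] [NormedSpace ℝ X]
    (Ω : Set X) (hΩ : Convex ℝ Ω) (κ₁ κ₂ α₁ α₂ β₁ β₂ : ℝ)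
    (hκ₁ : 0 ≤ κ₁) (hκβ₁ : κ₁ ≤ β₁) (hβ₁ : β₁ ≤ 1)
    (hκ₂ : 0 ≤ κ₂) (hκβ₂ : κ₂ ≤ β₂) (hβ₂ : β₂ ≤ 1)
    (hα₁ : α₁ ∈ Set.Icc (0 : ℝ) 1) (hα₂ : α₂ ∈ Set.Icc (0 : ℝ) 1)
    (S₁ S₂ T₁ T₂ : X → X)
    (hS₁map : ∀ ξ ∈ Ω, S₁ ξ ∈ Ω) (hS₂map : ∀ ξ ∈ Ω, S₂ ξ ∈ Ω)
    (hT₁map : ∀ ξ ∈ Ω, T₁ ξ ∈ Ω) (hT₂map : ∀ ξ ∈ Ω, T₂ ξ ∈ Ω)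
    (hS₁low : ∀ ξ ∈ Ω, ∀ η ∈ Ω, κ₁ * ‖ξ - η‖ ≤ ‖S₁ ξ - S₁ η‖)
    (hS₁up : ∀ ξ ∈ Ω, ∀ η ∈ Ω, ‖S₁ ξ - S₁ η‖ ≤ β₁ * ‖ξ - η‖)
    (hS₂low : ∀ ξ ∈ Ω, ∀ η ∈ Ω, κ₂ * ‖ξ - η‖ ≤ ‖S₂ ξ - S₂ η‖)
    (hS₂up : ∀ ξ ∈ Ω, ∀ η ∈ Ω, ‖S₂ ξ - S₂ η‖ ≤ β₂ * ‖ξ - η‖)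
    (hT₁ : ∀ ξ ∈ Ω, ∀ η ∈ Ω, ‖T₁ ξ - T₁ η‖ ≤ α₁ * ‖ξ - η‖)
    (hT₂ : ∀ ξ ∈ Ω, ∀ η ∈ Ω, ‖T₂ ξ - T₂ η‖ ≤ α₂ * ‖ξ - η‖)
    (xs : X) (hxs : xs ∈ Ω)
    (hfS₁ : S₁ xs = xs) (hfS₂ : S₂ xs = xs) (hfT₁ : T₁ xs = xs) (hfT₂ : T₂ xs = xs)
    (a b : ℕ → ℝ)
    (ha : ∀ n, a n ∈ Set.Icc (0 : ℝ) 1) (hb : ∀ n, b n ∈ Set.Icc (0 : ℝ) 1)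
    (ha' : ∀ n, a n ≤ κ₁ / (κ₁ + α₁)) (hb' : ∀ n, b n ≤ κ₂ / (κ₂ + α₂))
    (x y : ℕ → X) (hxΩ : ∀ n, x n ∈ Ω) (hyΩ : ∀ n, y n ∈ Ω)
    (hy : ∀ n, y n = (1 - a n) • S₁ (x n) + a n • T₁ (x n))
    (hx : ∀ n, x (n + 1) = (1 - b n) • S₂ (y n) + b n • T₂ (y n)) :
    ∀ n, (∏ k ∈ Finset.range (n + 1),
        (κ₁ - (κ₁ + α₁) * a k) * (κ₂ - (κ₂ + α₂) * b k)) * ‖x 0 - xs‖ ≤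
      ‖x (n + 1) - xs‖ := by
  have hc₁ : ∀ n, 0 ≤ κ₁ - (κ₁ + α₁) * a n := by
    intro n
    rcases eq_or_lt_of_le (add_nonneg hκ₁ hα₁.1) with h | h
    · have hκ0 : κ₁ = 0 := by linarith [hα₁.1]
      have hα0 : α₁ = 0 := by linarith
      simp [hκ0, hα0]
    · have h' := ha' n
      rw [le_div_iff₀ h] at h'
      linarith
  have hc₂ : ∀ n, 0 ≤ κ₂ - (κ₂ + α₂) * b n := by
    intro n
    rcases eq_or_lt_of_le (add_nonneg hκ₂ hα₂.1) with h | h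
    · have hκ0 : κ₂ = 0 := by linarith [hα₂.1]
      have hα0 : α₂ = 0 := by linarith
      simp [hκ0, hα0]
    · have h' := hb' n
      rw [le_div_iff₀ h] at h'
      linarith
  have main : ∀ n, ((κ₁ - (κ₁ + α₁) * a n) * (κ₂ - (κ₂ + α₂) * b n)) * ‖x n - xs‖
      ≤ ‖x (n + 1) - xs‖ := by
    intro n
    have hyd : (κ₁ - (κ₁ + α₁) * a n) * ‖x n - xs‖ ≤ ‖y n - xs‖ := by
      have hrw : y n - xs = (1 - a n) • (S₁ (x n) - xs) + (a n) • (T₁ (x n) - xs) := by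
        rw [hy n]; module
      rw [hrw]
      refine G_key κ₁ α₁ (a n) (ha n).1 (ha n).2 _ _ _ ?_ ?_
      · rw [show S₁ (x n) - xs = S₁ (x n) - S₁ xs by rw [hfS₁]]
        exact hS₁low _ (hxΩ n) _ hxs
      · rw [show T₁ (x n) - xs = T₁ (x n) - T₁ xs by rw [hfT₁]]
        exact hT₁ _ (hxΩ n) _ hxs
    have hxd : (κ₂ - (κ₂ + α₂) * b n) * ‖y n - xs‖ ≤ ‖x (n + 1) - xs‖ := by
      have hrw : x (n + 1) - xs = (1 - b n) • (S₂ (y n) - xs) + (b n) • (T₂ (y n) - xs) := by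
        rw [hx n]; module
      rw [hrw]
      refine G_key κ₂ α₂ (b n) (hb n).1 (hb n).2 _ _ _ ?_ ?_
      · rw [show S₂ (y n) - xs = S₂ (y n) - S₂ xs by rw [hfS₂]]
        exact hS₂low _ (hyΩ n) _ hxs
      · rw [show T₂ (y n) - xs = T₂ (y n) - T₂ xs by rw [hfT₂]]
        exact hT₂ _ (hyΩ n) _ hxs
    calc ((κ₁ - (κ₁ + α₁) * a n) * (κ₂ - (κ₂ + α₂) * b n)) * ‖x n - xs‖
        = (κ₂ - (κ₂ + α₂) * b n) * ((κ₁ - (κ₁ + α₁) * a n) * ‖x n - xs‖) := by ring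
      _ ≤ (κ₂ - (κ₂ + α₂) * b n) * ‖y n - xs‖ :=
          mul_le_mul_of_nonneg_left hyd (hc₂ n)
      _ ≤ ‖x (n + 1) - xs‖ := hxd
  intro n
  induction n with
  | zero => simpa using main 0
  | succ n ih =>
    have hP : 0 ≤ ∏ k ∈ Finset.range (n + 1),
        (κ₁ - (κ₁ + α₁) * a k) * (κ₂ - (κ₂ + α₂) * b k) :=
      Finset.prod_nonneg fun k _ => mul_nonneg (hc₁ k) (hc₂ k)
    have hcn : 0 ≤ (κ₁ - (κ₁ + α₁) * a (n + 1)) * (κ₂ - (κ₂ + α₂) * b (n + 1)) :=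
      mul_nonneg (hc₁ (n + 1)) (hc₂ (n + 1))
    rw [Finset.prod_range_succ]
    calc ((∏ k ∈ Finset.range (n + 1), (κ₁ - (κ₁ + α₁) * a k) * (κ₂ - (κ₂ + α₂) * b k)) *
          ((κ₁ - (κ₁ + α₁) * a (n + 1)) * (κ₂ - (κ₂ + α₂) * b (n + 1)))) * ‖x 0 - xs‖
        = ((κ₁ - (κ₁ + α₁) * a (n + 1)) * (κ₂ - (κ₂ + α₂) * b (n + 1))) *
          ((∏ k ∈ Finset.range (n + 1), (κ₁ - (κ₁ + α₁) * a k) * (κ₂ - (κ₂ + α₂) * b k)) *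
            ‖x 0 - xs‖) := by ring
      _ ≤ ((κ₁ - (κ₁ + α₁) * a (n + 1)) * (κ₂ - (κ₂ + α₂) * b (n + 1))) * ‖x (n + 1) - xs‖ :=
          mul_le_mul_of_nonneg_left ih hcn
      _ ≤ ‖x (n + 2) - xs‖ := main (n + 1)
end

section
/- Let α₁ ∈ [0,1], α₂ ∈ [0,1], δ > 0, and sequences (a_k),(b_k) ⊂ [0,1] with 1 - b_k - α₂ b_k(1 - a_k + α₁ a_k) ≥ δ for all k. If ∑_k [(1-α₁)(a_k+1) + (α₁ - α₂ - (1+α₂)/δ)b_k] = +∞, then the ratio β_n = ∏_{k=0}^{n} ([α₁(1-b_k)+α₂b_k][1-(1-α₁)a_k]) / (1 - b_k - α₂b_k[1-(1-α₁)a_k]) tends to 0 as n → ∞. -/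
open Filter

theorem IG_faster_than_I (α₁ α₂ δ : ℝ)
    (hα₁ : α₁ ∈ Set.Icc (0 : ℝ) 1) (hα₂ : α₂ ∈ Set.Icc (0 : ℝ) 1) (hδ : 0 < δ)
    (a b : ℕ → ℝ)
    (ha : ∀ k, a k ∈ Set.Icc (0 : ℝ) 1) (hb : ∀ k, b k ∈ Set.Icc (0 : ℝ) 1)
    (hδ' : ∀ k, 1 - b k - α₂ * b k * (1 - a k + α₁ * a k) ≥ δ)
    (hdiv : Tendsto (fun n => ∑ k ∈ Finset.range n,
        ((1 - α₁) * (a k + 1) + (α₁ - α₂ - (1 + α₂) / δ) * b k)) atTop atTop) :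
    Tendsto (fun n => ∏ k ∈ Finset.range (n + 1),
      ((α₁ * (1 - b k) + α₂ * b k) * (1 - (1 - α₁) * a k)) /
        (1 - b k - α₂ * b k * (1 - (1 - α₁) * a k))) atTop (nhds 0) := by
  obtain ⟨hα₁0, hα₁1⟩ := hα₁
  obtain ⟨hα₂0, hα₂1⟩ := hα₂
  set c : ℕ → ℝ := fun k =>
      (1 - α₁) * (a k + 1) + (α₁ - α₂ - (1 + α₂) / δ) * b k with hc
  set r : ℕ → ℝ := fun k =>
      ((α₁ * (1 - b k) + α₂ * b k) * (1 - (1 - α₁) * a k)) /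
        (1 - b k - α₂ * b k * (1 - (1 - α₁) * a k)) with hr
  have key : ∀ k, 0 ≤ r k ∧ r k ≤ Real.exp (-(c k)) := by
    intro k
    obtain ⟨ha0, ha1⟩ := ha k
    obtain ⟨hb0, hb1⟩ := hb k
    set P : ℝ := α₁ * (1 - b k) + α₂ * b k with hP
    set Q : ℝ := 1 - (1 - α₁) * a k with hQ
    set D : ℝ := 1 - b k - α₂ * b k * (1 - (1 - α₁) * a k) with hD
    have hDδ : δ ≤ D := by
      have h := hδ' k
      have : 1 - a k + α₁ * a k = 1 - (1 - α₁) * a k := by ring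
      rw [this] at h
      simpa [hD] using h
    have hDpos : 0 < D := lt_of_lt_of_le hδ hDδ
    have hP0 : 0 ≤ P := by nlinarith
    have hQ0 : 0 ≤ Q := by nlinarith
    have hQ1 : Q ≤ 1 := by nlinarith
    have hr0 : 0 ≤ r k := div_nonneg (mul_nonneg hP0 hQ0) hDpos.le
    refine ⟨hr0, ?_⟩
    rcases eq_or_lt_of_le (mul_nonneg hP0 hQ0) with hPQ | hPQ
    · have : r k = 0 := by rw [hr]; simp [← hP, ← hQ, ← hD, ← hPQ]
      rw [this]; exact (Real.exp_pos _).le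
    · have hPpos : 0 < P := by
        rcases hP0.lt_or_eq with h | h
        · exact h
        · exfalso; nlinarith
      have hQpos : 0 < Q := by
        rcases hQ0.lt_or_eq with h | h
        · exact h
        · exfalso; nlinarith
      have hrpos : 0 < P * Q / D := div_pos hPQ hDpos
      have : r k = P * Q / D := rfl
      rw [this, ← Real.log_le_iff_le_exp hrpos]
      have hlog : Real.log (P * Q / D) = Real.log P + Real.log Q - Real.log D := by
        rw [Real.log_div (by positivity) (by positivity),
          Real.log_mul (by positivity) (by positivity)]
      rw [hlog]
      have h1 : Real.log P ≤ P - 1 := Real.log_le_sub_one_of_pos hPpos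
      have h2 : Real.log Q ≤ Q - 1 := Real.log_le_sub_one_of_pos hQpos
      have h3 : -Real.log D ≤ (1 - D) / D := by
        have : Real.log D⁻¹ ≤ D⁻¹ - 1 := Real.log_le_sub_one_of_pos (by positivity)
        rw [Real.log_inv] at this
        have hEq : D⁻¹ - 1 = (1 - D) / D := by field_simp
        linarith [hEq ▸ this]
      have hone : 1 - D = b k + α₂ * b k * Q := by rw [hD, hQ]; ring
      have hnum0 : 0 ≤ 1 - D := by
        rw [hone]; nlinarith [mul_nonneg (mul_nonneg hα₂0 hb0) hQ0]
      have hnum1 : 1 - D ≤ (1 + α₂) * b k := by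
        rw [hone]; nlinarith [mul_nonneg (mul_nonneg hα₂0 hb0) (sub_nonneg.mpr hQ1)]
      have h4 : (1 - D) / D ≤ (1 + α₂) * b k / δ := by gcongr
      have hring : (P - 1) + (Q - 1) = -(c k) - (1 + α₂) * b k / δ := by
        rw [hP, hQ, hc]
        field_simp
        ring
      calc Real.log P + Real.log Q - Real.log D
          ≤ (P - 1) + (Q - 1) + (1 - D) / D := by linarith
        _ ≤ (-(c k) - (1 + α₂) * b k / δ) + (1 + α₂) * b k / δ := by
            linarith [hring, h4]
        _ = -(c k) := by ring
  have hupper : ∀ n, ∏ k ∈ Finset.range (n + 1), r k ≤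
      Real.exp (-(∑ k ∈ Finset.range (n + 1), c k)) := by
    intro n
    calc ∏ k ∈ Finset.range (n + 1), r k
        ≤ ∏ k ∈ Finset.range (n + 1), Real.exp (-(c k)) :=
          Finset.prod_le_prod (fun k _ => (key k).1) (fun k _ => (key k).2)
      _ = Real.exp (∑ k ∈ Finset.range (n + 1), -(c k)) := (Real.exp_sum _ _).symm
      _ = Real.exp (-(∑ k ∈ Finset.range (n + 1), c k)) := by rw [Finset.sum_neg_distrib]
  have hlower : ∀ n, 0 ≤ ∏ k ∈ Finset.range (n + 1), r k := fun n =>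
    Finset.prod_nonneg (fun k _ => (key k).1)
  have hg : Tendsto (fun n => Real.exp (-(∑ k ∈ Finset.range (n + 1), c k)))
      atTop (nhds 0) := by
    apply Real.tendsto_exp_atBot.comp
    apply tendsto_neg_atTop_atBot.comp
    exact hdiv.comp (tendsto_add_atTop_nat 1)
  exact squeeze_zero hlower hupper hg
end

section
/- Let α₁,α₂ ∈ [0,1], ε, τ > 0 and sequences (a_k),(b_k) ⊂ [0,1] with 1 - a_k - α₁a_k ≥ ε and 1 - b_k - α₂b_k ≥ τ for all k. If ∑_k [(1-α₁)a_k + ((α₁-α₂)/(ετ))b_k + 1 - α₁/(ετ)] = +∞, then γ_n = ∏_{k=0}^{n} ([α₁(1-b_k)+α₂b_k][1-(1-α₁)a_k]) / ([1-(1+α₂)b_k][1-(1+α₁)a_k]) tends to 0 as n → ∞. -/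
open Filter

theorem IG_faster_than_IM (α₁ α₂ ε τ : ℝ)
    (hα₁ : α₁ ∈ Set.Icc (0 : ℝ) 1) (hα₂ : α₂ ∈ Set.Icc (0 : ℝ) 1)
    (hε : 0 < ε) (hτ : 0 < τ)
    (a b : ℕ → ℝ)
    (ha : ∀ k, a k ∈ Set.Icc (0 : ℝ) 1) (hb : ∀ k, b k ∈ Set.Icc (0 : ℝ) 1)
    (hε' : ∀ k, 1 - a k - α₁ * a k ≥ ε) (hτ' : ∀ k, 1 - b k - α₂ * b k ≥ τ)
    (hdiv : Tendsto (fun n => ∑ k ∈ Finset.range n,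
        ((1 - α₁) * a k + (α₁ - α₂) / (ε * τ) * b k + 1 - α₁ / (ε * τ)))
      atTop atTop) :
    Tendsto (fun n => ∏ k ∈ Finset.range (n + 1),
      ((α₁ * (1 - b k) + α₂ * b k) * (1 - (1 - α₁) * a k)) /
        ((1 - (1 + α₂) * b k) * (1 - (1 + α₁) * a k))) atTop (nhds 0) := by
  obtain ⟨hα₁0, hα₁1⟩ := hα₁
  obtain ⟨hα₂0, hα₂1⟩ := hα₂
  have hετ : (0:ℝ) < ε * τ := mul_pos hε hτ
  set c : ℕ → ℝ := fun k =>
    (1 - α₁) * a k + (α₁ - α₂) / (ε * τ) * b k + 1 - α₁ / (ε * τ) with hc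
  set f : ℕ → ℝ := fun k =>
    ((α₁ * (1 - b k) + α₂ * b k) * (1 - (1 - α₁) * a k)) /
      ((1 - (1 + α₂) * b k) * (1 - (1 + α₁) * a k)) with hf
  have hDa : ∀ k, ε ≤ 1 - (1 + α₁) * a k := by
    intro k
    calc ε ≤ 1 - a k - α₁ * a k := hε' k
    _ = 1 - (1 + α₁) * a k := by ring
  have hDb : ∀ k, τ ≤ 1 - (1 + α₂) * b k := by
    intro k
    calc τ ≤ 1 - b k - α₂ * b k := hτ' k
    _ = 1 - (1 + α₂) * b k := by ring
  have hkey : ∀ k, 0 ≤ f k ∧ f k ≤ Real.exp (-(c k)) := by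
    intro k
    obtain ⟨ha0, ha1⟩ := ha k
    obtain ⟨hb0, hb1⟩ := hb k
    set x : ℝ := α₁ * (1 - b k) + α₂ * b k with hxdef
    set u : ℝ := 1 - (1 - α₁) * a k with hudef
    set y : ℝ := (1 - (1 + α₂) * b k) * (1 - (1 + α₁) * a k) with hydef
    have hx : 0 ≤ x := by
      have : 0 ≤ 1 - b k := by linarith
      positivity
    have hy : ε * τ ≤ y := by
      have := mul_le_mul (hDb k) (hDa k) hε.le (by nlinarith [hDb k])
      calc ε * τ = τ * ε := by ring
      _ ≤ y := this
    have hy0 : 0 < y := lt_of_lt_of_le hετ hy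
    have hu0 : 0 ≤ u := by nlinarith [hDa k]
    have hu : u ≤ Real.exp (-((1 - α₁) * a k)) := by
      have := Real.add_one_le_exp (-((1 - α₁) * a k))
      linarith
    have hfeq : f k = x / y * u := by
      simp only [hf]
      rw [mul_div_right_comm]
    have hxy : x / y ≤ x / (ε * τ) := by gcongr
    have hx2 : x / (ε * τ) ≤ Real.exp (x / (ε * τ) - 1) := by
      have := Real.add_one_le_exp (x / (ε * τ) - 1)
      linarith
    constructor
    · rw [hfeq]; positivity
    · rw [hfeq]
      calc x / y * u ≤ x / (ε * τ) * u := by gcongr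
      _ ≤ Real.exp (x / (ε * τ) - 1) * Real.exp (-((1 - α₁) * a k)) := by
          exact mul_le_mul hx2 hu hu0 (Real.exp_pos _).le
      _ = Real.exp (x / (ε * τ) - 1 + -((1 - α₁) * a k)) := (Real.exp_add _ _).symm
      _ = Real.exp (-(c k)) := by
          congr 1
          simp only [hc, hxdef]
          field_simp
          ring
  have hub : ∀ n, ∏ k ∈ Finset.range (n + 1), f k ≤
      Real.exp (-(∑ k ∈ Finset.range (n + 1), c k)) := by
    intro n
    calc ∏ k ∈ Finset.range (n + 1), f k
        ≤ ∏ k ∈ Finset.range (n + 1), Real.exp (-(c k)) :=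
          Finset.prod_le_prod (fun k _ => (hkey k).1) (fun k _ => (hkey k).2)
    _ = Real.exp (∑ k ∈ Finset.range (n + 1), -(c k)) := (Real.exp_sum _ _).symm
    _ = Real.exp (-(∑ k ∈ Finset.range (n + 1), c k)) := by rw [Finset.sum_neg_distrib]
  have hlb : ∀ n, 0 ≤ ∏ k ∈ Finset.range (n + 1), f k := fun n =>
    Finset.prod_nonneg fun k _ => (hkey k).1
  have hS : Tendsto (fun n => ∑ k ∈ Finset.range (n + 1), c k) atTop atTop :=
    hdiv.comp (tendsto_add_atTop_nat 1)
  have hE : Tendsto (fun n => Real.exp (-(∑ k ∈ Finset.range (n + 1), c k)))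
      atTop (nhds 0) :=
    Real.tendsto_exp_atBot.comp (tendsto_neg_atTop_atBot.comp hS)
  exact squeeze_zero hlb hub hE
end

section
/- Let α₁,κ₁,α₂,β₁,β₂ ∈ (0,1] with β₂ ≤ κ₁ ≤ α₁, and (a_n),(b_n) ⊂ [0,1] with a_n ≤ (1-β₁)/(1-β₁+2α₁) and b_n ≤ (κ₁-β₂)/(κ₁-β₂+2α₂). Define P_n = ∏_{k=0}^{n} ([β₁+(α₁-β₁)a_k][β₂+(α₂-β₂)b_k]) / ([1-(1+α₁)a_k][κ₁-(κ₁+α₂)b_k]). If ∑_n ((1-β₁)/(1-β₁+2α₁) - a_n) + ∑_n ((κ₁-β₂)/(κ₁-β₂+2α₂) - b_n) = +∞, then P_n → 0 as n → ∞. -/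
open Filter

set_option maxHeartbeats 1000000

theorem G_faster_than_IG (α₁ κ₁ α₂ β₁ β₂ : ℝ)
    (hα₁ : α₁ ∈ Set.Ioc (0 : ℝ) 1) (hκ₁ : κ₁ ∈ Set.Ioc (0 : ℝ) 1)
    (hα₂ : α₂ ∈ Set.Ioc (0 : ℝ) 1) (hβ₁ : β₁ ∈ Set.Ioc (0 : ℝ) 1)
    (hβ₂ : β₂ ∈ Set.Ioc (0 : ℝ) 1)
    (hβκ : β₂ ≤ κ₁) (hκα : κ₁ ≤ α₁)
    (a b : ℕ → ℝ)
    (ha : ∀ n, a n ∈ Set.Icc (0 : ℝ) 1) (hb : ∀ n, b n ∈ Set.Icc (0 : ℝ) 1)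
    (ha' : ∀ n, a n ≤ (1 - β₁) / (1 - β₁ + 2 * α₁))
    (hb' : ∀ n, b n ≤ (κ₁ - β₂) / (κ₁ - β₂ + 2 * α₂))
    (hdiv : Tendsto (fun n => ∑ k ∈ Finset.range n,
        (((1 - β₁) / (1 - β₁ + 2 * α₁) - a k)
          + ((κ₁ - β₂) / (κ₁ - β₂ + 2 * α₂) - b k))) atTop atTop) :
    Tendsto (fun n => ∏ k ∈ Finset.range (n + 1),
      ((β₁ + (α₁ - β₁) * a k) * (β₂ + (α₂ - β₂) * b k)) /
        ((1 - (1 + α₁) * a k) * (κ₁ - (κ₁ + α₂) * b k))) atTop (nhds 0) := by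
  obtain ⟨hα₁0, hα₁1⟩ := hα₁
  obtain ⟨hκ₁0, hκ₁1⟩ := hκ₁
  obtain ⟨hα₂0, hα₂1⟩ := hα₂
  obtain ⟨hβ₁0, hβ₁1⟩ := hβ₁
  obtain ⟨hβ₂0, hβ₂1⟩ := hβ₂
  have hc₁ : (0:ℝ) < 1 - β₁ + 2 * α₁ := by linarith
  have hc₂ : (0:ℝ) < κ₁ - β₂ + 2 * α₂ := by linarith
  set A := (1 - β₁) / (1 - β₁ + 2 * α₁) with hA
  set B := (κ₁ - β₂) / (κ₁ - β₂ + 2 * α₂) with hB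
  set c := min (1 - β₁ + 2 * α₁) (κ₁ - β₂ + 2 * α₂) with hc
  have hc0 : 0 < c := lt_min hc₁ hc₂
  have hAc : A * (1 - β₁ + 2 * α₁) = 1 - β₁ := div_mul_cancel₀ _ hc₁.ne'
  have hBc : B * (κ₁ - β₂ + 2 * α₂) = κ₁ - β₂ := div_mul_cancel₀ _ hc₂.ne'
  set u := fun k => (A - a k) + (B - b k) with hu
  set F := fun k => ((β₁ + (α₁ - β₁) * a k) * (β₂ + (α₂ - β₂) * b k)) /
        ((1 - (1 + α₁) * a k) * (κ₁ - (κ₁ + α₂) * b k)) with hF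
  -- denominators positive
  have hd1 : ∀ k, 0 < 1 - (1 + α₁) * a k := by
    intro k
    have h := ha' k
    have h2 : (1 + α₁) * A < 1 := by
      rw [hA, ← mul_div_assoc, div_lt_one hc₁]; nlinarith
    nlinarith [mul_le_mul_of_nonneg_left h (by linarith : (0:ℝ) ≤ 1 + α₁)]
  have hd2 : ∀ k, 0 < κ₁ - (κ₁ + α₂) * b k := by
    intro k
    have h := hb' k
    have h2 : (κ₁ + α₂) * B < κ₁ := by
      rw [hB, ← mul_div_assoc, div_lt_iff₀ hc₂]
      nlinarith [mul_pos hα₂0 hκ₁0, mul_pos hα₂0 hβ₂0]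
    nlinarith [mul_le_mul_of_nonneg_left h (by linarith : (0:ℝ) ≤ κ₁ + α₂)]
  -- numerators positive
  have hn1 : ∀ k, 0 < β₁ + (α₁ - β₁) * a k := by
    intro k
    obtain ⟨h0, h1⟩ := ha k
    nlinarith [mul_nonneg hβ₁0.le (by linarith : (0:ℝ) ≤ 1 - a k),
      mul_nonneg hα₁0.le h0, mul_pos hβ₁0 hα₁0]
  have hn2 : ∀ k, 0 < β₂ + (α₂ - β₂) * b k := by
    intro k
    obtain ⟨h0, h1⟩ := hb k
    nlinarith [mul_nonneg hβ₂0.le (by linarith : (0:ℝ) ≤ 1 - b k),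
      mul_nonneg hα₂0.le h0, mul_pos hβ₂0 hα₂0]
  have hF0 : ∀ k, 0 ≤ F k := fun k =>
    div_nonneg (mul_nonneg (hn1 k).le (hn2 k).le)
      (mul_nonneg (hd1 k).le (hd2 k).le)
  -- first factor bound
  have hf1 : ∀ k, (β₁ + (α₁ - β₁) * a k) / (1 - (1 + α₁) * a k)
      ≤ 1 - (1 - β₁ + 2 * α₁) * (A - a k) := by
    intro k
    obtain ⟨h0, h1⟩ := ha k
    rw [div_le_iff₀ (hd1 k)]
    have hAa : 0 ≤ A - a k := by linarith [ha' k]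
    nlinarith [mul_nonneg (mul_nonneg (mul_nonneg hc₁.le hAa)
      (by linarith : (0:ℝ) ≤ 1 + α₁)) h0]
  have hf2 : ∀ k, (β₂ + (α₂ - β₂) * b k) / (κ₁ - (κ₁ + α₂) * b k)
      ≤ 1 - (κ₁ - β₂ + 2 * α₂) * (B - b k) := by
    intro k
    obtain ⟨h0, h1⟩ := hb k
    rw [div_le_iff₀ (hd2 k)]
    have hBb : 0 ≤ B - b k := by linarith [hb' k]
    nlinarith [mul_nonneg (mul_nonneg (mul_nonneg hc₂.le hBb)
      (by linarith : (0:ℝ) ≤ κ₁ + α₂)) h0,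
      mul_nonneg (mul_nonneg hc₂.le hBb) (by linarith : (0:ℝ) ≤ 1 - κ₁)]
  -- key pointwise bound
  have key : ∀ k, F k ≤ Real.exp (-(c * u k)) := by
    intro k
    have hs1 : (β₁ + (α₁ - β₁) * a k) / (1 - (1 + α₁) * a k)
        ≤ Real.exp (-((1 - β₁ + 2 * α₁) * (A - a k))) :=
      (hf1 k).trans (by linarith [Real.add_one_le_exp (-((1 - β₁ + 2 * α₁) * (A - a k)))])
    have hs2 : (β₂ + (α₂ - β₂) * b k) / (κ₁ - (κ₁ + α₂) * b k)
        ≤ Real.exp (-((κ₁ - β₂ + 2 * α₂) * (B - b k))) :=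
      (hf2 k).trans (by linarith [Real.add_one_le_exp (-((κ₁ - β₂ + 2 * α₂) * (B - b k)))])
    have hpos2 : 0 ≤ (β₂ + (α₂ - β₂) * b k) / (κ₁ - (κ₁ + α₂) * b k) :=
      div_nonneg (hn2 k).le (hd2 k).le
    have hsplit : F k = ((β₁ + (α₁ - β₁) * a k) / (1 - (1 + α₁) * a k)) *
        ((β₂ + (α₂ - β₂) * b k) / (κ₁ - (κ₁ + α₂) * b k)) := by
      rw [hF]; rw [div_mul_div_comm]
    rw [hsplit]
    calc _ ≤ Real.exp (-((1 - β₁ + 2 * α₁) * (A - a k))) *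
          Real.exp (-((κ₁ - β₂ + 2 * α₂) * (B - b k))) :=
        mul_le_mul hs1 hs2 hpos2 (Real.exp_nonneg _)
      _ = Real.exp (-((1 - β₁ + 2 * α₁) * (A - a k)) + -((κ₁ - β₂ + 2 * α₂) * (B - b k))) :=
        (Real.exp_add _ _).symm
      _ ≤ Real.exp (-(c * u k)) := by
        apply Real.exp_le_exp.2
        have hAa : 0 ≤ A - a k := by linarith [ha' k]
        have hBb : 0 ≤ B - b k := by linarith [hb' k]
        have h1 : c * (A - a k) ≤ (1 - β₁ + 2 * α₁) * (A - a k) :=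
          mul_le_mul_of_nonneg_right (min_le_left _ _) hAa
        have h2 : c * (B - b k) ≤ (κ₁ - β₂ + 2 * α₂) * (B - b k) :=
          mul_le_mul_of_nonneg_right (min_le_right _ _) hBb
        have huk : u k = (A - a k) + (B - b k) := rfl
        rw [huk]; nlinarith
  -- upper bound tendsto 0
  have hS : Tendsto (fun n => ∑ k ∈ Finset.range (n + 1), u k) atTop atTop := by
    have := hdiv.comp (tendsto_add_atTop_nat 1)
    exact this
  have hexp : Tendsto (fun n => Real.exp (-(c * ∑ k ∈ Finset.range (n + 1), u k)))
      atTop (nhds 0) := by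
    apply Real.tendsto_exp_atBot.comp
    apply tendsto_neg_atTop_atBot.comp
    exact hS.const_mul_atTop hc0
  refine tendsto_of_tendsto_of_tendsto_of_le_of_le tendsto_const_nhds hexp ?_ ?_
  · intro n
    exact Finset.prod_nonneg fun k _ => hF0 k
  · intro n
    calc ∏ k ∈ Finset.range (n + 1), F k
        ≤ ∏ k ∈ Finset.range (n + 1), Real.exp (-(c * u k)) :=
          Finset.prod_le_prod (fun k _ => hF0 k) (fun k _ => key k)
      _ = Real.exp (∑ k ∈ Finset.range (n + 1), -(c * u k)) := (Real.exp_sum _ _).symm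
      _ = Real.exp (-(c * ∑ k ∈ Finset.range (n + 1), u k)) := by
          congr 1
          rw [Finset.mul_sum, ← Finset.sum_neg_distrib]
end
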